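/- The constant 1/|q₁−q₂| in the semiconcavity bound for f(y) = max(y₁,y₂) at a point q with q₁ ≠ q₂ is optimal: the extremal case occurs at y = (q₂, q₁), and for any C ≥ 0 such that max(y₁,y₂) ≤ ∇f(q)·y + (C/2)‖y−q‖² for all y ∈ ℝ², one has C ≥ 1/|q₁−q₂|. -/

import Mathlib

theorem stmt_3 (q : EuclideanSpace ℝ (Fin 2)) (hq : q 0 ≠ q 1) (C : ℝ) (hC : 0 ≤ C)
    (h : ∀ y : EuclideanSpace ℝ (Fin 2),
      max (y 0) (y 1) ≤ (if q 0 > q 1 then y 0 else y 1) + C / 2 * ‖y - q‖ ^ 2) :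
    C ≥ 1 / |q 0 - q 1| := by
  set y : EuclideanSpace ℝ (Fin 2) := !₂[q 1, q 0] with hy
  have hy0 : (y : Fin 2 → ℝ) 0 = q 1 := rfl
  have hy1 : (y : Fin 2 → ℝ) 1 = q 0 := rfl
  have hnorm : ‖y - q‖ ^ 2 = 2 * (q 0 - q 1) ^ 2 := by
    rw [EuclideanSpace.norm_eq, Real.sq_sqrt (by positivity)]
    have : ∀ i : Fin 2, (y - q) i = y i - q i := fun i => rfl
    rw [Fin.sum_univ_two, this 0, this 1, hy0, hy1]
    rw [Real.norm_eq_abs, Real.norm_eq_abs, sq_abs, sq_abs]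
    ring
  have key := h y
  rw [hnorm, hy0, hy1] at key
  have hd : (q 0 - q 1) ≠ 0 := sub_ne_zero.mpr hq
  rw [ge_iff_le, div_le_iff₀ (abs_pos.mpr hd)]
  rcases lt_or_gt_of_ne hq with hlt | hgt
  · -- q 0 < q 1
    rw [if_neg (not_lt.mpr hlt.le)] at key
    have hmax : max (q 1) (q 0) = q 1 := max_eq_left hlt.le
    rw [hmax] at key
    have habs : |q 0 - q 1| = q 1 - q 0 := by rw [abs_of_neg (show q 0 - q 1 < 0 by linarith)]; ring
    rw [habs]
    nlinarith [sq_nonneg (q 0 - q 1)]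
  · rw [if_pos hgt] at key
    have hmax : max (q 1) (q 0) = q 0 := max_eq_right hgt.le
    rw [hmax] at key
    have habs : |q 0 - q 1| = q 0 - q 1 := abs_of_pos (by linarith)
    rw [habs]
    nlinarith [sq_nonneg (q 0 - q 1)]
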